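/- Let n be odd and let G_h(s,x) = (s² − 2Re(x)s + |x|²)^{-(h+1)}(s − x̄) for paravectors s, x with x ∉ [s]. In the quaternionic case (n = 3, h = 1), the function x ↦ G₁(s,x) = (s² − 2Re(x)s + |x|²)^{-2}(s − x̄) is right Fueter-regular in x, i.e. ∂G₁/∂x₀ + (∂G₁/∂x₁)i + (∂G₁/∂x₂)j + (∂G₁/∂x₃)k = 0 wherever s² − 2Re(x)s + |x|² is invertible. -/

import Mathlib

set_option maxHeartbeats 1000000
set_option linter.unnecessarySeqFocus false

open Quaternion

/-- The directional derivative of `f : ℍ → ℍ` at `q` in the direction `d`. -/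
noncomputable def dirD (f : Quaternion ℝ → Quaternion ℝ) (d q : Quaternion ℝ) : Quaternion ℝ :=
  deriv (fun t : ℝ => f (q + t • d)) 0

/-- The quaternion units `i`, `j`, `k`. -/
def qI : Quaternion ℝ := ⟨0, 1, 0, 0⟩
def qJ : Quaternion ℝ := ⟨0, 0, 1, 0⟩
def qK : Quaternion ℝ := ⟨0, 0, 0, 1⟩

/-- The kernel `G₁(s,x) = (s² - 2Re(x)s + |x|²)⁻² (s - x̄)`. -/
noncomputable def G1 (s y : Quaternion ℝ) : Quaternion ℝ :=
  ((s * s - ((2 * y.re : ℝ) : Quaternion ℝ) * s +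
    ((Quaternion.normSq y : ℝ) : Quaternion ℝ))⁻¹) ^ 2 * (s - star y)

section Aux

private noncomputable def AA (s x : Quaternion ℝ) : Quaternion ℝ :=
  s * s - ((2 * x.re : ℝ) : Quaternion ℝ) * s + ((Quaternion.normSq x : ℝ) : Quaternion ℝ)

private noncomputable def CC (s x d : Quaternion ℝ) : Quaternion ℝ :=
  -(((2 * d.re : ℝ) : Quaternion ℝ) * s) +
    ((2 * (x.re * d.re + x.imI * d.imI + x.imJ * d.imJ + x.imK * d.imK) : ℝ) : Quaternion ℝ)

private lemma hasDerivAt_qinv {B : ℝ → Quaternion ℝ} {B' : Quaternion ℝ} {t : ℝ}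
    (hB : HasDerivAt B B' t) (h : B t ≠ 0) :
    HasDerivAt (fun u => (B u)⁻¹) (-((B t)⁻¹ * B' * (B t)⁻¹)) t := by
  have hf := hasFDerivAt_ringInverse (𝕜 := ℝ) (Units.mk0 (B t) h)
  have := hf.comp_hasDerivAt t hB
  simpa [Ring.inverse_eq_inv', Function.comp_def] using this

private lemma hasDerivAt_qcoe {g : ℝ → ℝ} {g' t : ℝ} (hg : HasDerivAt g g' t) :
    HasDerivAt (fun u => ((g u : ℝ) : Quaternion ℝ)) ((g' : ℝ) : Quaternion ℝ) t := by
  have e : ∀ r : ℝ, r • (1 : Quaternion ℝ) = (r : Quaternion ℝ) := fun r => by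
    rw [← Quaternion.coe_mul_eq_smul, mul_one]
  have := hg.smul_const (1 : Quaternion ℝ)
  simp only [e] at this
  exact this

private lemma dirD_G1 (s x d : Quaternion ℝ) (h : AA s x ≠ 0) :
    dirD (G1 s) d x =
      (-((AA s x)⁻¹ * CC s x d * (AA s x)⁻¹) * (AA s x)⁻¹ +
        (AA s x)⁻¹ * -((AA s x)⁻¹ * CC s x d * (AA s x)⁻¹)) * (s - star x) +
        (AA s x)⁻¹ * (AA s x)⁻¹ * -(star d) := by
  have h1 : HasDerivAt (fun t : ℝ => x.re + t * d.re) d.re 0 := by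
    simpa using ((hasDerivAt_id (0 : ℝ)).mul_const d.re).const_add x.re
  have h2 : HasDerivAt (fun t : ℝ => x.imI + t * d.imI) d.imI 0 := by
    simpa using ((hasDerivAt_id (0 : ℝ)).mul_const d.imI).const_add x.imI
  have h3 : HasDerivAt (fun t : ℝ => x.imJ + t * d.imJ) d.imJ 0 := by
    simpa using ((hasDerivAt_id (0 : ℝ)).mul_const d.imJ).const_add x.imJ
  have h4 : HasDerivAt (fun t : ℝ => x.imK + t * d.imK) d.imK 0 := by
    simpa using ((hasDerivAt_id (0 : ℝ)).mul_const d.imK).const_add x.imK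
  have hre : HasDerivAt (fun t : ℝ => 2 * (x + t • d).re) (2 * d.re) 0 := by
    simp only [Quaternion.re_add, Quaternion.re_smul, smul_eq_mul]
    exact h1.const_mul 2
  have hdot : HasDerivAt (fun t : ℝ => Quaternion.normSq (x + t • d))
      (2 * (x.re * d.re + x.imI * d.imI + x.imJ * d.imJ + x.imK * d.imK)) 0 := by
    simp only [Quaternion.normSq_def', Quaternion.re_add, Quaternion.imI_add,
      Quaternion.imJ_add, Quaternion.imK_add, Quaternion.re_smul, Quaternion.imI_smul,
      Quaternion.imJ_smul, Quaternion.imK_smul, smul_eq_mul]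
    have := (((h1.pow 2).add (h2.pow 2)).add (h3.pow 2)).add (h4.pow 2)
    exact this.congr_deriv (by norm_num; ring)
  have hB : HasDerivAt (fun t : ℝ => s * s - ((2 * (x + t • d).re : ℝ) : Quaternion ℝ) * s +
      ((Quaternion.normSq (x + t • d) : ℝ) : Quaternion ℝ)) (CC s x d) 0 := by
    have := ((hasDerivAt_const (0 : ℝ) (s * s)).sub
      ((hasDerivAt_qcoe hre).mul_const s)).add (hasDerivAt_qcoe hdot)
    simpa [CC, zero_sub, Pi.sub_def, Pi.add_def] using this
  have h0 : (s * s - ((2 * (x + (0:ℝ) • d).re : ℝ) : Quaternion ℝ) * s +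
      ((Quaternion.normSq (x + (0:ℝ) • d) : ℝ) : Quaternion ℝ)) = AA s x := by
    simp [AA]
  have hne : (s * s - ((2 * (x + (0:ℝ) • d).re : ℝ) : Quaternion ℝ) * s +
      ((Quaternion.normSq (x + (0:ℝ) • d) : ℝ) : Quaternion ℝ)) ≠ 0 := by
    rw [h0]; exact h
  have hInv : HasDerivAt (fun t : ℝ => (s * s - ((2 * (x + t • d).re : ℝ) : Quaternion ℝ) * s +
      ((Quaternion.normSq (x + t • d) : ℝ) : Quaternion ℝ))⁻¹)
      (-((AA s x)⁻¹ * CC s x d * (AA s x)⁻¹)) 0 := by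
    have := hasDerivAt_qinv hB hne
    rw [h0] at this
    exact this
  have hlin : HasDerivAt (fun t : ℝ => s - star (x + t • d)) (-(star d)) 0 := by
    have : HasDerivAt (fun t : ℝ => s - (star x + t • star d)) (0 - (1:ℝ) • star d) 0 :=
      (hasDerivAt_const (0 : ℝ) s).sub (((hasDerivAt_id (0 : ℝ)).smul_const (star d)).const_add (star x))
    simpa [star_add, Quaternion.star_smul] using this
  have hmain : HasDerivAt (fun t : ℝ => G1 s (x + t • d))
      ((-((AA s x)⁻¹ * CC s x d * (AA s x)⁻¹) * (AA s x)⁻¹ +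
        (AA s x)⁻¹ * -((AA s x)⁻¹ * CC s x d * (AA s x)⁻¹)) * (s - star x) +
        (AA s x)⁻¹ * (AA s x)⁻¹ * -(star d)) 0 := by
    simp only [G1, pow_two]
    have := (hInv.mul hInv).mul hlin
    simpa only [zero_smul, add_zero, h0, Pi.mul_def, AA] using this
  unfold dirD
  exact hmain.deriv

private lemma tech1 (u C : Quaternion ℝ) (h : u * C = C * u) :
    -(u * C * u) * u + u * -(u * C * u) = u * (u * u) * (-(2 : Quaternion ℝ) * C) := by
  have hc : Commute u C := h
  have hc3 : Commute (u * (u * u)) C := hc.mul_left (hc.mul_left hc)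
  have e1 : u * C * u * u = u * (u * u) * C := by
    rw [h, mul_assoc, mul_assoc, ← hc3.eq]
  have e2 : u * (u * C * u) = u * (u * u) * C := by
    calc u * (u * C * u) = u * (u * C) * u := by noncomm_ring
    _ = u * (C * u) * u := by rw [h]
    _ = u * C * u * u := by noncomm_ring
    _ = u * (u * u) * C := e1
  calc -(u * C * u) * u + u * -(u * C * u)
      = -(u * C * u * u) + -(u * (u * C * u)) := by noncomm_ring
    _ = -(u * (u * u) * C) + -(u * (u * u) * C) := by rw [e1, e2]
    _ = u * (u * u) * (-(2 : Quaternion ℝ) * C) := by noncomm_ring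

end Aux

/-- The function `x ↦ G₁(s,x) = (s² - 2Re(x)s + |x|²)⁻²(s - x̄)` is right Fueter-regular:
`∂G₁/∂x₀ + (∂G₁/∂x₁)i + (∂G₁/∂x₂)j + (∂G₁/∂x₃)k = 0` wherever
`s² - 2Re(x)s + |x|²` is invertible (nonzero). -/
theorem G1_right_Fueter_regular (s x : Quaternion ℝ)
    (h : s * s - ((2 * x.re : ℝ) : Quaternion ℝ) * s +
      ((Quaternion.normSq x : ℝ) : Quaternion ℝ) ≠ 0) :
    dirD (G1 s) 1 x +
      dirD (G1 s) qI x * qI +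
      dirD (G1 s) qJ x * qJ +
      dirD (G1 s) qK x * qK = 0 := by
  have hA : AA s x ≠ 0 := h
  rw [dirD_G1 s x 1 hA, dirD_G1 s x qI hA, dirD_G1 s x qJ hA, dirD_G1 s x qK hA]
  have hC1 : CC s x 1 = -(((2 : ℝ) : Quaternion ℝ) * s) + ((2 * x.re : ℝ) : Quaternion ℝ) := by
    norm_num [CC]
  have hCI : CC s x qI = ((2 * x.imI : ℝ) : Quaternion ℝ) := by
    norm_num [CC, qI]
  have hCJ : CC s x qJ = ((2 * x.imJ : ℝ) : Quaternion ℝ) := by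
    norm_num [CC, qJ]
  have hCK : CC s x qK = ((2 * x.imK : ℝ) : Quaternion ℝ) := by
    norm_num [CC, qK]
  rw [hC1, hCI, hCJ, hCK]
  have hsA : Commute s (AA s x) := by
    unfold AA
    exact (((Commute.refl s).mul_right (Commute.refl s)).sub_right
      ((Quaternion.coe_commute (2 * x.re) s).symm.mul_right (Commute.refl s))).add_right
      (Quaternion.coe_commute (Quaternion.normSq x) s).symm
  have hcomm1 : (AA s x)⁻¹ * (-(((2 : ℝ) : Quaternion ℝ) * s) + ((2 * x.re : ℝ) : Quaternion ℝ))
      = (-(((2 : ℝ) : Quaternion ℝ) * s) + ((2 * x.re : ℝ) : Quaternion ℝ)) * (AA s x)⁻¹ := by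
    refine (Commute.inv_left₀ ?_).eq
    exact (((Quaternion.coe_commute (2 : ℝ) (AA s x)).symm.mul_right hsA.symm).neg_right).add_right
      (Quaternion.coe_commute (2 * x.re) (AA s x)).symm
  have hcommI : (AA s x)⁻¹ * ((2 * x.imI : ℝ) : Quaternion ℝ)
      = ((2 * x.imI : ℝ) : Quaternion ℝ) * (AA s x)⁻¹ := ((Quaternion.coe_commute _ _).symm).eq
  have hcommJ : (AA s x)⁻¹ * ((2 * x.imJ : ℝ) : Quaternion ℝ)
      = ((2 * x.imJ : ℝ) : Quaternion ℝ) * (AA s x)⁻¹ := ((Quaternion.coe_commute _ _).symm).eq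
  have hcommK : (AA s x)⁻¹ * ((2 * x.imK : ℝ) : Quaternion ℝ)
      = ((2 * x.imK : ℝ) : Quaternion ℝ) * (AA s x)⁻¹ := ((Quaternion.coe_commute _ _).symm).eq
  rw [tech1 _ _ hcomm1, tech1 _ _ hcommI, tech1 _ _ hcommJ, tech1 _ _ hcommK]
  have key : ∀ u v C1 CI CJ CK w1 wI wJ wK : Quaternion ℝ,
      (u * (u * u) * (-(2 : Quaternion ℝ) * C1) * v + u * u * w1)
        + (u * (u * u) * (-(2 : Quaternion ℝ) * CI) * v + u * u * wI) * qI
        + (u * (u * u) * (-(2 : Quaternion ℝ) * CJ) * v + u * u * wJ) * qJ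
        + (u * (u * u) * (-(2 : Quaternion ℝ) * CK) * v + u * u * wK) * qK
      = u * (u * (u * (-(2 : Quaternion ℝ) *
          (C1 * v + CI * (v * qI) + CJ * (v * qJ) + CK * (v * qK)))))
        + u * (u * (w1 + wI * qI + wJ * qJ + wK * qK)) := by
    intros; noncomm_ring
  rw [key]
  have hW : (-(((2 : ℝ) : Quaternion ℝ) * s) + ((2 * x.re : ℝ) : Quaternion ℝ)) * (s - star x)
      + ((2 * x.imI : ℝ) : Quaternion ℝ) * ((s - star x) * qI)
      + ((2 * x.imJ : ℝ) : Quaternion ℝ) * ((s - star x) * qJ)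
      + ((2 * x.imK : ℝ) : Quaternion ℝ) * ((s - star x) * qK)
      = -(2 : Quaternion ℝ) * AA s x := by
    have h2 : (2 : Quaternion ℝ) = ((2 : ℝ) : Quaternion ℝ) := by norm_cast
    rw [h2]
    unfold AA
    apply Quaternion.ext <;>
      simp only [Quaternion.re_add, Quaternion.imI_add, Quaternion.imJ_add, Quaternion.imK_add,
        Quaternion.re_mul, Quaternion.imI_mul, Quaternion.imJ_mul, Quaternion.imK_mul] <;>
      simp [qI, qJ, qK, Quaternion.normSq_def', Quaternion.re_mul, Quaternion.imI_mul,
        Quaternion.imJ_mul, Quaternion.imK_mul, ← Quaternion.coe_pow] <;>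
      ring
  have hstar : -(star (1 : Quaternion ℝ)) + -(star qI) * qI + -(star qJ) * qJ + -(star qK) * qK
      = -(4 : Quaternion ℝ) := by
    have h4 : (4 : Quaternion ℝ) = ((4 : ℝ) : Quaternion ℝ) := by norm_cast
    rw [h4]
    apply Quaternion.ext <;>
      simp only [Quaternion.re_add, Quaternion.imI_add, Quaternion.imJ_add, Quaternion.imK_add,
        Quaternion.re_mul, Quaternion.imI_mul, Quaternion.imJ_mul, Quaternion.imK_mul,
        Quaternion.re_neg, Quaternion.imI_neg, Quaternion.imJ_neg, Quaternion.imK_neg,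
        Quaternion.re_star, Quaternion.imI_star, Quaternion.imJ_star, Quaternion.imK_star] <;>
      simp [qI, qJ, qK, Quaternion.re_mul, Quaternion.imI_mul,
        Quaternion.imJ_mul, Quaternion.imK_mul] <;>
      norm_num
  rw [hW, hstar]
  have h4 : -(2 : Quaternion ℝ) * (-(2 : Quaternion ℝ) * AA s x)
      = (4 : Quaternion ℝ) * AA s x := by noncomm_ring
  rw [h4]
  have h6 : (AA s x)⁻¹ * ((AA s x)⁻¹ * ((AA s x)⁻¹ * ((4 : Quaternion ℝ) * AA s x)))
      = (4 : Quaternion ℝ) * ((AA s x)⁻¹ * ((AA s x)⁻¹ * ((AA s x)⁻¹ * AA s x))) := by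
    noncomm_ring
  rw [h6, inv_mul_cancel₀ hA]
  noncomm_ring
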